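/- Let 𝒫 be a finite set of properties, X ⊆ ℝⁿ a convex set, and for each p ∈ 𝒫 let γ_p : ℝⁿ → ℝ be a scoring function. Suppose every epistemic state is realized: for every subset Q' ⊆ 𝒫 there exists e ∈ X with Γ(e) = Q', where Γ(e) = {p ∈ 𝒫 : γ_p(e) > 0}. Let Q = {p_1,...,p_k} be a nonempty subset of 𝒫 and let γ_Q : ℝⁿ → ℝ be such that for all e ∈ X, γ_Q(e) > 0 ↔ (γ_p(e) > 0 for every p ∈ Q). If γ_Q and every γ_p with p ∈ Q are affine functions (each of the form x ↦ ⟨w, x⟩ + b for some w ∈ ℝⁿ and b ∈ ℝ), then |Q| = 1. -/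
import Mathlib

/-- Affine functions commute with convex combinations of two points. -/
lemma aff_seg {n : ℕ} {γ : (Fin n → ℝ) → ℝ}
    (h : ∃ (w : Fin n → ℝ) (b : ℝ), ∀ x, γ x = (∑ i, w i * x i) + b)
    (u v : Fin n → ℝ) (t : ℝ) :
    γ ((1 - t) • u + t • v) = (1 - t) * γ u + t * γ v := by
  obtain ⟨w, b, hw⟩ := h
  simp only [hw, Pi.add_apply, Pi.smul_apply, smul_eq_mul]
  have hsum : ∑ i, w i * ((1 - t) * u i + t * v i)
      = ∑ i, ((1 - t) * (w i * u i) + t * (w i * v i)) :=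
    Finset.sum_congr rfl (by intros; ring)
  rw [hsum, Finset.sum_add_distrib, ← Finset.mul_sum, ← Finset.mul_sum]
  ring

/-- If an affine function of `t` is positive on `(t0, 1]` with `t0 < 1`,
then it is nonnegative at `t0`. -/
lemma affine_nonneg_at (c0 c1 t0 : ℝ) (ht0 : t0 < 1)
    (h : ∀ t, t0 < t → t ≤ 1 → 0 < c0 + c1 * t) : 0 ≤ c0 + c1 * t0 := by
  by_contra hneg
  push_neg at hneg
  set s := min (1 - t0) (-(c0 + c1 * t0) / (2 * (|c1| + 1))) with hs
  have hden : (0:ℝ) < 2 * (|c1| + 1) := by positivity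
  have h1 : 0 < s := lt_min (by linarith) (div_pos (by linarith) hden)
  have h2 : t0 + s ≤ 1 := by have := min_le_left (1 - t0) (-(c0 + c1 * t0) / (2 * (|c1| + 1))); linarith
  have h3 := h (t0 + s) (by linarith) h2
  have hsle : s ≤ -(c0 + c1 * t0) / (2 * (|c1| + 1)) := min_le_right _ _
  have hc1s : c1 * s ≤ |c1| * s := mul_le_mul_of_nonneg_right (le_abs_self c1) h1.le
  have habs : |c1| * s ≤ |c1| * (-(c0 + c1 * t0) / (2 * (|c1| + 1))) :=
    mul_le_mul_of_nonneg_left hsle (abs_nonneg c1)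
  have hkey : |c1| * (-(c0 + c1 * t0) / (2 * (|c1| + 1))) ≤ -(c0 + c1 * t0) / 2 := by
    rw [← mul_div_assoc, div_le_div_iff₀ hden (by norm_num : (0:ℝ) < 2)]
    nlinarith [abs_nonneg c1]
  nlinarith

/-- On a convex set, given a point `a` where all scores in `Q` except possibly `q`
are positive and the joint score is nonpositive, and a point `c` where all scores
are positive, there is a point where the joint score vanishes, all scores except
`q` are positive, and the score of `q` is nonnegative. -/
lemma cross {n : ℕ} {P : Type*} [Fintype P] {X : Set (Fin n → ℝ)} (hX : Convex ℝ X)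
    {γ : P → (Fin n → ℝ) → ℝ} {Q : Finset P} {γQ : (Fin n → ℝ) → ℝ}
    (hlink : ∀ e ∈ X, γQ e > 0 ↔ ∀ p ∈ Q, γ p e > 0)
    (haffQ : ∃ (w : Fin n → ℝ) (b : ℝ), ∀ x, γQ x = (∑ i, w i * x i) + b)
    (haffp : ∀ p ∈ Q, ∃ (w : Fin n → ℝ) (b : ℝ), ∀ x, γ p x = (∑ i, w i * x i) + b)
    {q : P} (hqQ : q ∈ Q) {a c : Fin n → ℝ} (haX : a ∈ X) (hcX : c ∈ X)
    (hA : ∀ r ∈ Q, r ≠ q → 0 < γ r a) (hC : ∀ r ∈ Q, 0 < γ r c)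
    (hfa : γQ a ≤ 0) :
    ∃ z ∈ X, γQ z = 0 ∧ (∀ r ∈ Q, r ≠ q → 0 < γ r z) ∧ 0 ≤ γ q z := by
  have hfc : 0 < γQ c := (hlink c hcX).mpr hC
  have hD : γQ a - γQ c < 0 := by linarith
  set t1 := γQ a / (γQ a - γQ c) with ht1
  have ht1_0 : 0 ≤ t1 := by
    rw [ht1, div_nonneg_iff]; right; exact ⟨hfa, hD.le⟩
  have ht1_1 : t1 < 1 := by
    rw [ht1, div_lt_iff_of_neg hD]; linarith
  set pt := fun t : ℝ => (1 - t) • a + t • c with hptdef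
  have hpt : ∀ t, 0 ≤ t → t ≤ 1 → pt t ∈ X := fun t h0 h1 =>
    hX haX hcX (by linarith) h0 (by ring)
  have hγQ : ∀ t, γQ (pt t) = (1 - t) * γQ a + t * γQ c := fun t => aff_seg haffQ a c t
  have hz0 : γQ (pt t1) = 0 := by
    rw [hγQ, ht1]; field_simp [hD.ne]; ring
  refine ⟨pt t1, hpt t1 ht1_0 ht1_1.le, hz0, ?_, ?_⟩
  · intro r hr hrq
    have heq := aff_seg (haffp r hr) a c t1
    have h1 := hA r hr hrq
    have h2 := hC r hr
    have : γ r (pt t1) = (1 - t1) * γ r a + t1 * γ r c := heq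
    rw [this]
    nlinarith
  · have hq_seg : ∀ t, γ q (pt t) = (1 - t) * γ q a + t * γ q c :=
      fun t => aff_seg (haffp q hqQ) a c t
    have key : ∀ t, t1 < t → t ≤ 1 → 0 < γ q a + (γ q c - γ q a) * t := by
      intro t ht htle
      have hmem := hpt t (le_trans ht1_0 ht.le) htle
      have hmul : t * (γQ a - γQ c) < γQ a := by
        have := (div_lt_iff_of_neg hD).mp (ht1 ▸ ht)
        linarith
      have hfpos : 0 < γQ (pt t) := by
        rw [hγQ]; nlinarith
      have hall := (hlink (pt t) hmem).mp hfpos q hqQ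
      rw [hq_seg] at hall
      nlinarith
    have hnn := affine_nonneg_at (γ q a) (γ q c - γ q a) t1 ht1_1 key
    rw [hq_seg]
    nlinarith

/-- Under the strict semantics, on a convex set X where every epistemic
state is realized, if a joint scoring function γ_Q for a nonempty Q ⊆ 𝒫 and all the
scoring functions γ_p with p ∈ Q are affine, then |Q| = 1. -/
theorem strict_linear_joint_scoring_trivial (n : ℕ) (P : Type*) [Fintype P]
    (X : Set (Fin n → ℝ)) (hX : Convex ℝ X)
    (γ : P → (Fin n → ℝ) → ℝ)
    (hreal : ∀ Q' : Set P, ∃ e ∈ X, ∀ p : P, γ p e > 0 ↔ p ∈ Q')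
    (Q : Finset P) (hQ : Q.Nonempty)
    (γQ : (Fin n → ℝ) → ℝ)
    (hlink : ∀ e ∈ X, γQ e > 0 ↔ ∀ p ∈ Q, γ p e > 0)
    (haffQ : ∃ (w : Fin n → ℝ) (b : ℝ), ∀ x, γQ x = (∑ i, w i * x i) + b)
    (haffp : ∀ p ∈ Q, ∃ (w : Fin n → ℝ) (b : ℝ), ∀ x, γ p x = (∑ i, w i * x i) + b) :
    Q.card = 1 := by
  by_contra hcard
  have h1 : 1 < Q.card := lt_of_le_of_ne hQ.card_pos (Ne.symm hcard)
  obtain ⟨p, hp, q, hq, hpq⟩ := Finset.one_lt_card.mp h1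
  obtain ⟨a, haX, ha⟩ := hreal {r | r ≠ q}
  obtain ⟨b, hbX, hb⟩ := hreal {r | r ≠ p}
  obtain ⟨c, hcX, hc⟩ := hreal Set.univ
  have hC : ∀ r ∈ Q, 0 < γ r c := fun r _ => (hc r).mpr (Set.mem_univ r)
  have hA : ∀ r ∈ Q, r ≠ q → 0 < γ r a := fun r _ hr => (ha r).mpr hr
  have hB : ∀ r ∈ Q, r ≠ p → 0 < γ r b := fun r _ hr => (hb r).mpr hr
  have hfa : γQ a ≤ 0 := by
    by_contra hpos
    push_neg at hpos
    exact (ha q).mp ((hlink a haX).mp hpos q hq) rfl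
  have hfb : γQ b ≤ 0 := by
    by_contra hpos
    push_neg at hpos
    exact (hb p).mp ((hlink b hbX).mp hpos p hp) rfl
  obtain ⟨z, hzX, hz0, hzpos, hzq⟩ := cross hX hlink haffQ haffp hq haX hcX hA hC hfa
  obtain ⟨z', hz'X, hz'0, hz'pos, hz'p⟩ := cross hX hlink haffQ haffp hp hbX hcX hB hC hfb
  set w := (1 - (1/2 : ℝ)) • z + (1/2 : ℝ) • z' with hwdef
  have hwX : w ∈ X := hX hzX hz'X (by norm_num) (by norm_num) (by norm_num)
  have hwQ : γQ w = 0 := by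
    rw [hwdef, aff_seg haffQ z z' (1/2), hz0, hz'0]; ring
  have hwpos : ∀ r ∈ Q, 0 < γ r w := by
    intro r hr
    have heq : γ r w = (1 - (1/2 : ℝ)) * γ r z + (1/2 : ℝ) * γ r z' :=
      aff_seg (haffp r hr) z z' (1/2)
    rw [heq]
    by_cases hrp : r = p
    · subst hrp
      have h1 := hzpos r hr hpq
      nlinarith
    · by_cases hrq : r = q
      · subst hrq
        have h1 := hz'pos r hr (Ne.symm hpq)
        nlinarith
      · have h1 := hzpos r hr hrq
        have h2 := hz'pos r hr hrp
        nlinarith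
  have := (hlink w hwX).mpr hwpos
  linarith [hwQ, this]
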